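/- Every maximally balanced full binary tree with n leaves has minimal Colless index: if T is maximally balanced and has n leaves, then C(T) = c(n). -/
import Mathlib


/-- Full binary trees: either a single leaf, or a node with two full binary subtrees. -/
inductive FBT : Type
  | leaf : FBT
  | node : FBT → FBT → FBT

namespace FBT

/-- Number of leaves of a full binary tree. -/
def leaves : FBT → ℕ
  | leaf => 1
  | node a b => leaves a + leaves b

/-- The Colless index: the sum over internal nodes of the absolute difference of the
numbers of leaves of the two maximal pending subtrees. -/
def colless : FBT → ℕ
  | leaf => 0
  | node a b => colless a + colless b + Nat.dist (leaves a) (leaves b)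

end FBT

/-- The minimal Colless index over all full binary trees with `n` leaves. -/
noncomputable def minColless (n : ℕ) : ℕ :=
  sInf {m : ℕ | ∃ T : FBT, T.leaves = n ∧ T.colless = m}

/-- A full binary tree is maximally balanced if every internal node is balanced,
i.e. the numbers of leaves of its two maximal pending subtrees differ by at most 1. -/
inductive MaxBalanced : FBT → Prop
  | leaf : MaxBalanced FBT.leaf
  | node {a b : FBT} : MaxBalanced a → MaxBalanced b →
      Nat.dist a.leaves b.leaves ≤ 1 → MaxBalanced (FBT.node a b)


def cb : ℕ → ℕ
  | 0 => 0
  | 1 => 0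
  | (n+2) => cb (n/2 + 1) + cb ((n+1)/2 + 1) + n % 2
  decreasing_by all_goals omega

lemma cb_even (k : ℕ) : cb (2*(k+1)) = 2 * cb (k+1) := by
  have h : 2*(k+1) = (2*k) + 2 := by ring
  rw [h, cb]
  have h1 : 2*k/2 = k := by omega
  have h2 : (2*k+1)/2 = k := by omega
  rw [h1, h2]
  omega

lemma cb_odd (k : ℕ) : cb (2*(k+1)+1) = cb (k+1) + cb (k+2) + 1 := by
  have h : 2*(k+1)+1 = (2*k+1) + 2 := by ring
  rw [h, cb]
  have h1 : (2*k+1)/2 = k := by omega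
  have h2 : (2*k+1+1)/2 = k+1 := by omega
  rw [h1, h2]
  have e : cb (k+1+1) = cb (k+2) := rfl
  omega

lemma cb_step : ∀ b, 1 ≤ b → cb (b+1) + 1 ≤ cb b + b := by
  intro b
  induction b using Nat.strong_induction_on with
  | _ b ih =>
    intro hb
    rcases b with _ | (_ | n)
    · omega
    · simp [cb]
    · rcases Nat.even_or_odd (n+2) with ⟨m, hm⟩ | ⟨m, hm⟩
      · obtain ⟨k, rfl⟩ : ∃ k, m = k + 1 := ⟨m-1, by omega⟩
        have h1 : n + 2 = 2*(k+1) := by omega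
        rw [h1, cb_odd, cb_even]
        have := ih (k+1) (by omega) (by omega)
        have e : cb (k+1+1) = cb (k+2) := rfl
        omega
      · obtain ⟨k, rfl⟩ : ∃ k, m = k + 1 := ⟨m-1, by omega⟩
        have h1 : n + 2 = 2*(k+1)+1 := by omega
        rw [h1, show 2*(k+1)+1+1 = 2*((k+1)+1) by ring, cb_odd, cb_even]
        have := ih (k+1) (by omega) (by omega)
        have e : cb (k+1+1) = cb (k+2) := rfl
        omega

lemma cb_key : ∀ n a b : ℕ, a + b = n → cb n ≤ cb a + cb b + Nat.dist a b := by
  intro n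
  induction n using Nat.strong_induction_on with
  | _ n ih =>
    intro a b hab
    simp only [Nat.dist]
    rcases a with _ | (_ | a)
    · -- a = 0
      have : n = b := by omega
      subst this
      simp [cb]
    · -- a = 1
      rcases b with _ | b
      · have : n = 1 := by omega
        subst this
        simp [cb]
      · have hn : n = b + 2 := by omega
        have hs := cb_step (b+1) (by omega)
        have e1 : cb (b+1+1) = cb (b+2) := rfl
        have e2 : cb (0+1) = 0 := by simp [cb]
        rw [hn]
        omega
    · rcases b with _ | (_ | b)
      · -- b = 0
        have : n = a + 2 := by omega
        subst this
        simp [cb]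
      · -- b = 1
        have hn : n = a + 2 + 1 := by omega
        have hs := cb_step (a+2) (by omega)
        have e1 : cb (a+1+1) = cb (a+2) := rfl
        have e2 : cb (0+1) = 0 := by simp [cb]
        rw [hn]
        omega
      · -- a+2, b+2 main case
        rcases Nat.even_or_odd (a+2) with ⟨p, hp⟩ | ⟨p, hp⟩ <;>
          rcases Nat.even_or_odd (b+2) with ⟨q, hq⟩ | ⟨q, hq⟩
        · -- even, even
          obtain ⟨p, rfl⟩ : ∃ p', p = p' + 1 := ⟨p-1, by omega⟩
          obtain ⟨q, rfl⟩ : ∃ q', q = q' + 1 := ⟨q-1, by omega⟩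
          have hca : cb (a+2) = 2 * cb (p+1) := by
            rw [show a+2 = 2*(p+1) by omega, cb_even]
          have hcb : cb (b+2) = 2 * cb (q+1) := by
            rw [show b+2 = 2*(q+1) by omega, cb_even]
          have hcn : cb n = 2 * cb (p+q+1+1) := by
            rw [show n = 2*((p+q+1)+1) by omega, cb_even]
          have i1 := ih (p+q+1+1) (by omega) (p+1) (q+1) (by omega)
          simp only [Nat.dist] at i1
          have e1 : cb (a+1+1) = cb (a+2) := rfl
          have e2 : cb (b+1+1) = cb (b+2) := rfl
          omega
        · -- even, odd
          obtain ⟨p, rfl⟩ : ∃ p', p = p' + 1 := ⟨p-1, by omega⟩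
          obtain ⟨q, rfl⟩ : ∃ q', q = q' + 1 := ⟨q-1, by omega⟩
          have hca : cb (a+2) = 2 * cb (p+1) := by
            rw [show a+2 = 2*(p+1) by omega, cb_even]
          have hcb : cb (b+2) = cb (q+1) + cb (q+2) + 1 := by
            rw [show b+2 = 2*(q+1)+1 by omega, cb_odd]
          have hcn : cb n = cb (p+q+1+1) + cb (p+q+1+2) + 1 := by
            rw [show n = 2*((p+q+1)+1)+1 by omega, cb_odd]
          have i1 := ih (p+q+1+1) (by omega) (p+1) (q+1) (by omega)
          have i2 := ih (p+q+1+2) (by omega) (p+1) (q+2) (by omega)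
          simp only [Nat.dist] at i1 i2
          have e1 : cb (a+1+1) = cb (a+2) := rfl
          have e2 : cb (b+1+1) = cb (b+2) := rfl
          omega
        · -- odd, even
          obtain ⟨p, rfl⟩ : ∃ p', p = p' + 1 := ⟨p-1, by omega⟩
          obtain ⟨q, rfl⟩ : ∃ q', q = q' + 1 := ⟨q-1, by omega⟩
          have hca : cb (a+2) = cb (p+1) + cb (p+2) + 1 := by
            rw [show a+2 = 2*(p+1)+1 by omega, cb_odd]
          have hcb : cb (b+2) = 2 * cb (q+1) := by
            rw [show b+2 = 2*(q+1) by omega, cb_even]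
          have hcn : cb n = cb (p+q+1+1) + cb (p+q+1+2) + 1 := by
            rw [show n = 2*((p+q+1)+1)+1 by omega, cb_odd]
          have i1 := ih (p+q+1+1) (by omega) (p+1) (q+1) (by omega)
          have i2 := ih (p+q+1+2) (by omega) (p+2) (q+1) (by omega)
          simp only [Nat.dist] at i1 i2
          have e1 : cb (a+1+1) = cb (a+2) := rfl
          have e2 : cb (b+1+1) = cb (b+2) := rfl
          omega
        · -- odd, odd
          obtain ⟨p, rfl⟩ : ∃ p', p = p' + 1 := ⟨p-1, by omega⟩
          obtain ⟨q, rfl⟩ : ∃ q', q = q' + 1 := ⟨q-1, by omega⟩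
          have hca : cb (a+2) = cb (p+1) + cb (p+2) + 1 := by
            rw [show a+2 = 2*(p+1)+1 by omega, cb_odd]
          have hcb : cb (b+2) = cb (q+1) + cb (q+2) + 1 := by
            rw [show b+2 = 2*(q+1)+1 by omega, cb_odd]
          have hcn : cb n = 2 * cb (p+q+2+1) := by
            rw [show n = 2*((p+q+2)+1) by omega, cb_even]
          have i1 := ih (p+q+2+1) (by omega) (p+1) (q+2) (by omega)
          have i2 := ih (p+q+2+1) (by omega) (p+2) (q+1) (by omega)
          simp only [Nat.dist] at i1 i2
          have e1 : cb (a+1+1) = cb (a+2) := rfl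
          have e2 : cb (b+1+1) = cb (b+2) := rfl
          omega

lemma FBT.leaves_pos (T : FBT) : 1 ≤ T.leaves := by
  induction T with
  | leaf => simp [FBT.leaves]
  | node a b iha ihb => simp [FBT.leaves]; omega

lemma FBT.cb_le_colless (T : FBT) : cb T.leaves ≤ T.colless := by
  induction T with
  | leaf => simp [FBT.leaves, FBT.colless, cb]
  | node a b iha ihb =>
    have hk := cb_key (a.leaves + b.leaves) a.leaves b.leaves rfl
    simp only [FBT.leaves, FBT.colless]
    omega

lemma FBT.balanced_colless {T : FBT} (h : MaxBalanced T) : T.colless = cb T.leaves := by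
  induction h with
  | leaf => simp [FBT.leaves, FBT.colless, cb]
  | @node a b ha hb hd iha ihb =>
    have hpa := a.leaves_pos
    have hpb := b.leaves_pos
    simp only [FBT.leaves, FBT.colless, Nat.dist] at *
    rcases Nat.lt_trichotomy a.leaves b.leaves with hlt | heq | hgt
    · -- b.leaves = a.leaves + 1
      have hb1 : b.leaves = a.leaves + 1 := by omega
      obtain ⟨k, hk⟩ : ∃ k, a.leaves = k + 1 := ⟨a.leaves - 1, by omega⟩
      have hcn : cb (a.leaves + b.leaves) = cb (k+1) + cb (k+2) + 1 := by
        rw [show a.leaves + b.leaves = 2*(k+1)+1 by omega, cb_odd]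
      have e1 : cb a.leaves = cb (k+1) := by rw [hk]
      have e2 : cb b.leaves = cb (k+2) := by rw [hb1, hk]
      omega
    · have hcn : cb (a.leaves + b.leaves) = 2 * cb a.leaves := by
        obtain ⟨k, hk⟩ : ∃ k, a.leaves = k + 1 := ⟨a.leaves - 1, by omega⟩
        rw [show a.leaves + b.leaves = 2*(k+1) by omega, cb_even, ← hk]
      have e : cb a.leaves = cb b.leaves := by rw [heq]
      omega
    · have ha1 : a.leaves = b.leaves + 1 := by omega
      obtain ⟨k, hk⟩ : ∃ k, b.leaves = k + 1 := ⟨b.leaves - 1, by omega⟩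
      have hcn : cb (a.leaves + b.leaves) = cb (k+1) + cb (k+2) + 1 := by
        rw [show a.leaves + b.leaves = 2*(k+1)+1 by omega, cb_odd]
      have e1 : cb b.leaves = cb (k+1) := by rw [hk]
      have e2 : cb a.leaves = cb (k+2) := by rw [ha1, hk]
      omega

theorem maxBalanced_colless_minimal (T : FBT) (h : MaxBalanced T) :
    T.colless = minColless T.leaves := by
  have hb := FBT.balanced_colless h
  rw [hb]
  unfold minColless
  have hne : {m : ℕ | ∃ S : FBT, S.leaves = T.leaves ∧ S.colless = m}.Nonempty :=
    ⟨T.colless, T, rfl, rfl⟩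
  apply le_antisymm
  · refine le_csInf hne ?_
    rintro m ⟨S, hS1, hS2⟩
    rw [← hS2, ← hS1]
    exact S.cb_le_colless
  · exact Nat.sInf_le ⟨T, rfl, hb⟩
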